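/- Two-dimensional degeneracy bound for entangled quasicoherent states: let Λ = |O⟩⊗|Λ⁰⟩ + |I⟩⊗|Λ¹⟩ ∈ ℂ² ⊗ H with (|O⟩,|I⟩) an orthonormal basis of ℂ², and suppose ρ_Λ = tr_H |Λ⟩⟨Λ| is invertible (det ρ_Λ ≠ 0). Then the sesquilinear form on ℂ⁴ ≅ ℂ² ⊗ ℂ² given by ⟨v, (ρ_Λᵀ ⊗ id) w⟩ is a positive definite inner product. Consequently, a family of vectors of the form (u ⊗ id_H)Λ with u ∈ U(2), pairwise orthogonal in ℂ² ⊗ H, has at most 4 elements (since their 'ℂ⁴ coordinate' pairs (u|O⟩, u|I⟩) are pairwise orthogonal for this inner product). -/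

import Mathlib

open Matrix

noncomputable section

variable {H : Type*} [NormedAddCommGroup H] [InnerProductSpace ℂ H]

/-- Action of u ⊗ id_H on ℂ² ⊗ H ≅ H ⊕ H for a 2×2 complex matrix u. -/
def actU (M : Matrix (Fin 2) (Fin 2) ℂ) (v : PiLp 2 fun _ : Fin 2 => H) :
    PiLp 2 fun _ : Fin 2 => H :=
  WithLp.toLp 2 (fun j => ∑ k, M j k • v k)

/-- For an entangled quasicoherent state Λ ∈ ℂ² ⊗ H (reduced density matrix
ρ_Λ with det ρ_Λ ≠ 0), the form ⟨v, (ρ_Λᵀ ⊗ id) w⟩ on ℂ⁴ ≅ ℂ² ⊗ ℂ² is a positive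
definite inner product; consequently any family of pairwise orthogonal vectors of the
form (u ⊗ id_H)Λ with u ∈ U(2) has at most 4 elements. -/
theorem stmt19 (Λ : PiLp 2 fun _ : Fin 2 => H)
    (hdet : (Matrix.of fun j k => (inner ℂ (Λ k) (Λ j) : ℂ) :
      Matrix (Fin 2) (Fin 2) ℂ).det ≠ 0) :
    let ρ : Matrix (Fin 2) (Fin 2) ℂ := Matrix.of fun j k => (inner ℂ (Λ k) (Λ j) : ℂ)
    let B : (Fin 2 → Fin 2 → ℂ) → (Fin 2 → Fin 2 → ℂ) → ℂ := fun v w =>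
      ∑ j, ∑ k, ∑ l, (starRingEnd ℂ) (v j l) * ρ k j * w k l
    (∀ v w, B w v = (starRingEnd ℂ) (B v w)) ∧
    (∀ v, 0 ≤ (B v v).re ∧ (B v v).im = 0) ∧
    (∀ v, B v v = 0 → v = 0) ∧
    (∀ (ι : Type) (_ : Fintype ι) (u : ι → Matrix (Fin 2) (Fin 2) ℂ),
      (∀ i, (u i)ᴴ * u i = 1) →
      (∀ i i', i ≠ i' → (inner ℂ (actU (u i) Λ) (actU (u i') Λ) : ℂ) = 0) →
      Fintype.card ι ≤ 4) := by
  intro ρ B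
  -- representation of B via inner products
  set T : (Fin 2 → Fin 2 → ℂ) → Fin 2 → H := fun v l => ∑ j, v j l • Λ j with hT
  have hB : ∀ v w, B v w = ∑ l, (inner ℂ (T v l) (T w l) : ℂ) := by
    intro v w
    simp only [B, hT, sum_inner, inner_sum, inner_smul_left, inner_smul_right, inner_add_left,
      inner_add_right, ρ, Matrix.of_apply, Fin.sum_univ_two]
    ring
  -- linear independence of Λ 0, Λ 1
  have hLI : LinearIndependent ℂ Λ := by
    rw [Fintype.linearIndependent_iff]
    intro g hg
    have hz : ρᵀ.mulVec g = 0 := by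
      funext k
      have h0 : (inner ℂ (Λ k) (∑ j, g j • Λ j) : ℂ) = 0 := by rw [hg]; exact inner_zero_right _
      simpa [Matrix.mulVec, dotProduct, inner_sum, inner_add_right, inner_smul_right,
        ρ, Fin.sum_univ_two, mul_comm] using h0
    have : g = 0 :=
      Matrix.eq_zero_of_mulVec_eq_zero (by rwa [Matrix.det_transpose]) hz
    exact fun i => congrFun this i
  -- definiteness
  have hdef : ∀ v, B v v = 0 → v = 0 := by
    intro v hv
    rw [hB, Fin.sum_univ_two] at hv
    have a : 0 ≤ (inner ℂ (T v 0) (T v 0) : ℂ).re := by rw [← RCLike.re_to_complex]; exact inner_self_nonneg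
    have b : 0 ≤ (inner ℂ (T v 1) (T v 1) : ℂ).re := by rw [← RCLike.re_to_complex]; exact inner_self_nonneg
    have hsum := congrArg Complex.re hv
    simp only [Complex.add_re, Complex.zero_re] at hsum
    have ia : (inner ℂ (T v 0) (T v 0) : ℂ) = 0 := by
      apply Complex.ext
      · simp only [Complex.zero_re]; linarith
      · rw [← RCLike.im_to_complex, inner_self_im, Complex.zero_im]
    have ib : (inner ℂ (T v 1) (T v 1) : ℂ) = 0 := by
      apply Complex.ext
      · simp only [Complex.zero_re]; linarith
      · rw [← RCLike.im_to_complex, inner_self_im, Complex.zero_im]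
    have h0 : T v 0 = 0 := inner_self_eq_zero.mp ia
    have h1 : T v 1 = 0 := inner_self_eq_zero.mp ib
    funext j l
    have hl : ∀ l : Fin 2, T v l = 0 := by
      intro l; fin_cases l; exacts [h0, h1]
    exact Fintype.linearIndependent_iff.mp hLI (fun j => v j l) (hl l) j
  refine ⟨?_, ?_, hdef, ?_⟩
  · intro v w
    simp [hB, map_sum, inner_conj_symm]
  · intro v
    rw [hB, Fin.sum_univ_two]
    constructor
    · simp only [Complex.add_re]
      have a : 0 ≤ (inner ℂ (T v 0) (T v 0) : ℂ).re := by
        rw [← RCLike.re_to_complex]; exact inner_self_nonneg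
      have b : 0 ≤ (inner ℂ (T v 1) (T v 1) : ℂ).re := by
        rw [← RCLike.re_to_complex]; exact inner_self_nonneg
      linarith
    · simp only [Complex.add_im]
      rw [← RCLike.im_to_complex, inner_self_im, ← RCLike.im_to_complex, inner_self_im, add_zero]
  · intro ι hι u hu horto
    haveI := hι
    set V : ι → Fin 2 → Fin 2 → ℂ := fun i j l => u i l j with hV
    have hBV : ∀ i i', B (V i) (V i') = (inner ℂ (actU (u i) Λ) (actU (u i') Λ) : ℂ) := by
      intro i i'
      simp only [B, hV, actU, PiLp.inner_apply, PiLp.toLp_apply, ρ, Matrix.of_apply, Fin.sum_univ_two,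
        inner_add_left, inner_add_right, inner_smul_left, inner_smul_right]
      ring
    have hVne : ∀ i, V i ≠ 0 := by
      intro i h
      have hu0 : u i = 0 := by
        ext a b
        have := congrFun (congrFun h b) a
        simpa [hV] using this
      have h1 := hu i
      rw [hu0] at h1
      simp only [conjTranspose_zero, mul_zero] at h1
      have h2 : (0 : ℂ) = 1 := by simpa using congrFun (congrFun h1 0) 0
      exact zero_ne_one h2
    have hVV : ∀ i, B (V i) (V i) ≠ 0 := fun i h => hVne i (hdef _ h)
    -- linearity of B in second argument over sums
    have hlin : ∀ (v : Fin 2 → Fin 2 → ℂ) (g : ι → ℂ) (W : ι → Fin 2 → Fin 2 → ℂ),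
        B v (∑ i, g i • W i) = ∑ i, g i * B v (W i) := by
      intro v g W
      simp only [B, Fin.sum_univ_two, Finset.sum_apply, Pi.smul_apply, smul_eq_mul,
        Finset.mul_sum, ← Finset.sum_add_distrib]
      exact Finset.sum_congr rfl fun i _ => by ring
    have hLIV : LinearIndependent ℂ V := by
      rw [Fintype.linearIndependent_iff]
      intro g hg i₀
      have h0 : B (V i₀) (∑ i, g i • V i) = 0 := by
        rw [hg]; simp [B]
      rw [hlin] at h0
      rw [Finset.sum_eq_single i₀ (fun i _ hi => by
        rw [hBV, horto i₀ i (Ne.symm hi), mul_zero]) (fun h => absurd (Finset.mem_univ i₀) h)]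
        at h0
      rcases mul_eq_zero.mp h0 with h | h
      · exact h
      · exact absurd h (hVV i₀)
    have hcard := hLIV.fintype_card_le_finrank
    have hrank : Module.finrank ℂ (Fin 2 → Fin 2 → ℂ) = 4 := by
      simp [Module.finrank_pi_fintype]
    rw [hrank] at hcard
    exact (Subsingleton.elim this hι) ▸ hcard

end
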